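/- arXiv:2404.18813 — 6 statements merged into one kernel-verified Lean document; each statement's English description precedes it below -/
import Mathlib

section
/- Let f : ℝⁿ → ℝⁿ be a vector field and x : ℝ≥0 → ℝⁿ a continuously differentiable trajectory satisfying x'(t) = f(x(t)) for all t ≥ 0. Let B : ℝⁿ → ℝ be continuously differentiable. If B(x(0)) ≤ 0 and for every point y with B(y) = 0 the Lie derivative ∇B(y) · f(y) is strictly negative, then B(x(t)) ≤ 0 for all t ≥ 0. -/
open Topology Filter Set

/-- Barrier invariance: if `B(x 0) ≤ 0` and the Lie derivative `∇B(y)·f(y)`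
(expressed as `fderiv ℝ B y (f y)`) is strictly negative on the zero level set of `B`,
then `B(x t) ≤ 0` for all `t ≥ 0`. -/
theorem barrier_invariance {n : ℕ} (f : (Fin n → ℝ) → (Fin n → ℝ))
    (x : ℝ → (Fin n → ℝ)) (B : (Fin n → ℝ) → ℝ)
    (hx : ContDiff ℝ 1 x)
    (hode : ∀ t : ℝ, 0 ≤ t → HasDerivAt x (f (x t)) t)
    (hB : ContDiff ℝ 1 B)
    (h0 : B (x 0) ≤ 0)
    (hLie : ∀ y, B y = 0 → fderiv ℝ B y (f y) < 0) :
    ∀ t : ℝ, 0 ≤ t → B (x t) ≤ 0 := by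
  intro t₁ ht₁
  by_contra hpos
  push_neg at hpos
  set g : ℝ → ℝ := fun t => B (x t) with hg
  have hgc : Continuous g := hB.continuous.comp hx.continuous
  have hgd : ∀ t, 0 ≤ t → HasDerivAt g (fderiv ℝ B (x t) (f (x t))) t := by
    intro t ht
    exact ((hB.differentiable one_ne_zero (x t)).hasFDerivAt).comp_hasDerivAt t (hode t ht)
  set S := {t | t ∈ Set.Icc (0:ℝ) t₁ ∧ g t ≤ 0} with hS
  have hSne : S.Nonempty := ⟨0, ⟨le_rfl, ht₁⟩, h0⟩
  have hSbdd : BddAbove S := ⟨t₁, fun t ht => ht.1.2⟩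
  set s := sSup S with hs
  have hsmem : s ∈ S := by
    have hclosed : IsClosed S := isClosed_Icc.inter (isClosed_le hgc continuous_const)
    exact hclosed.csSup_mem hSne hSbdd
  have hs0 : 0 ≤ s := hsmem.1.1
  have hslt : s < t₁ := lt_of_le_of_ne hsmem.1.2 (by
    intro h; rw [h] at hsmem; exact absurd hsmem.2 (not_le.mpr hpos))
  have hgt : ∀ t, s < t → t ≤ t₁ → 0 < g t := by
    intro t hst' htt
    by_contra hle
    push_neg at hle
    have : t ∈ S := ⟨⟨le_trans hs0 hst'.le, htt⟩, hle⟩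
    exact absurd (le_csSup hSbdd this) (not_le.mpr hst')
  have hIoo : Set.Ioo s t₁ ∈ 𝓝[>] s := Ioo_mem_nhdsGT_of_mem ⟨le_rfl, hslt⟩
  have hgs : g s = 0 := by
    rcases lt_or_eq_of_le hsmem.2 with h | h
    · exfalso
      have hev : ∀ᶠ t in 𝓝 s, g t < 0 :=
        hgc.continuousAt.eventually_lt continuousAt_const h
      have hev' : ∀ᶠ t in 𝓝[>] s, g t < 0 := eventually_nhdsWithin_of_eventually_nhds hev
      rcases (hev'.and ((eventually_iff.mpr hIoo : ∀ᶠ t in 𝓝[>] s, t ∈ Set.Ioo s t₁))).exists with ⟨t, hlt, hmem⟩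
      exact absurd (hgt t hmem.1 hmem.2.le) (not_lt.mpr hlt.le)
    · exact h
  have hder : HasDerivAt g (fderiv ℝ B (x s) (f (x s))) s := hgd s hs0
  have hneg : fderiv ℝ B (x s) (f (x s)) < 0 := hLie (x s) hgs
  have hslope : Filter.Tendsto (slope g s) (𝓝[≠] s) (𝓝 (fderiv ℝ B (x s) (f (x s)))) :=
    hasDerivAt_iff_tendsto_slope.mp hder
  have hev : ∀ᶠ t in 𝓝[≠] s, slope g s t < 0 :=
    hslope.eventually_lt_const hneg
  have hle : (𝓝[>] s) ≤ 𝓝[≠] s := nhdsWithin_mono s fun t ht => ne_of_gt ht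
  have hev' : ∀ᶠ t in 𝓝[>] s, slope g s t < 0 := hev.filter_mono hle
  rcases (hev'.and ((eventually_iff.mpr hIoo : ∀ᶠ t in 𝓝[>] s, t ∈ Set.Ioo s t₁))).exists with ⟨t, hlt, hmem⟩
  have hsl : slope g s t = (g t - g s) / (t - s) := by
    rw [slope_def_field]
  rw [hsl, hgs, sub_zero] at hlt
  have htpos : 0 < t - s := sub_pos.mpr hmem.1
  have : g t < 0 := by
    rcases div_neg_iff.mp hlt with ⟨_, h2⟩ | ⟨h1, _⟩
    · linarith
    · exact h1
  exact absurd (hgt t hmem.1 hmem.2.le) (not_lt.mpr this.le)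
end

section
/- Let f : ℝⁿ → ℝⁿ be a vector field, X₀ and X_u subsets of ℝⁿ, and suppose B : ℝⁿ → ℝ is a barrier certificate: B ≤ 0 on X₀, B > 0 on X_u, and ∇B(y) · f(y) < 0 whenever B(y) = 0. Then for every continuously differentiable trajectory x with x(0) ∈ X₀ and x'(t) = f(x(t)) for all t ≥ 0, x(t) ∉ X_u for all t ≥ 0 (safety). -/
/-- Theorem 1 (safety via barrier certificates): if `B ≤ 0` on `X₀`, `B > 0` on `Xu`,
and the Lie derivative `∇B(y)·f(y)` is strictly negative whenever `B y = 0`, then no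
C¹ trajectory of `x' = f x` starting in `X₀` ever enters `Xu`. -/
theorem barrier_safety {n : ℕ} (f : (Fin n → ℝ) → (Fin n → ℝ))
    (X₀ Xu : Set (Fin n → ℝ)) (B : (Fin n → ℝ) → ℝ)
    (hB : ContDiff ℝ 1 B)
    (hInit : ∀ y ∈ X₀, B y ≤ 0)
    (hUnsafe : ∀ y ∈ Xu, 0 < B y)
    (hLie : ∀ y, B y = 0 → fderiv ℝ B y (f y) < 0) :
    ∀ x : ℝ → (Fin n → ℝ), ContDiff ℝ 1 x → x 0 ∈ X₀ →
      (∀ t : ℝ, 0 ≤ t → HasDerivAt x (f (x t)) t) →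
      ∀ t : ℝ, 0 ≤ t → x t ∉ Xu := by
  intro x hx hx0 hx' t ht hxt
  have hgt : 0 < B (x t) := hUnsafe _ hxt
  set g : ℝ → ℝ := fun u => B (x u) with hgdef
  have hgc : Continuous g := hB.continuous.comp hx.continuous
  set A : Set ℝ := Set.Icc 0 t ∩ {u | g u ≤ 0} with hA
  have h0A : (0:ℝ) ∈ A := ⟨⟨le_refl _, ht⟩, hInit _ hx0⟩
  have hbdd : BddAbove A := ⟨t, fun u hu => hu.1.2⟩
  set s := sSup A with hs
  have hsA : s ∈ A := by
    have hclosed : IsClosed A := isClosed_Icc.inter (isClosed_le hgc continuous_const)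
    exact hclosed.csSup_mem ⟨0, h0A⟩ hbdd
  obtain ⟨⟨hs0, hst⟩, hgs'⟩ := hsA
  have hgs : g s ≤ 0 := hgs'
  have hub : ∀ u ∈ A, u ≤ s := fun u hu => le_csSup hbdd hu
  have hslt : s < t := lt_of_le_of_ne hst (by
    intro h
    rw [h] at hgs
    exact absurd hgs (not_le.2 hgt))
  have hIoo : Set.Ioo s t ∈ nhdsWithin s (Set.Ioi s) :=
    Ioo_mem_nhdsGT_of_mem ⟨le_refl s, hslt⟩
  -- first: g s = 0
  have hgs0 : g s = 0 := by
    rcases lt_or_eq_of_le hgs with h | h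
    · exfalso
      have h1 : ∀ᶠ u in nhdsWithin s (Set.Ioi s), g u < 0 :=
        ((hgc.tendsto s).eventually_lt_const h).filter_mono nhdsWithin_le_nhds
      obtain ⟨u, hu1, hu2⟩ := (h1.and (Filter.eventually_mem_set.2 hIoo)).exists
      have huA : u ∈ A := ⟨⟨le_of_lt (lt_of_le_of_lt hs0 hu2.1), le_of_lt hu2.2⟩, le_of_lt hu1⟩
      exact absurd (hub u huA) (not_le.2 hu2.1)
    · exact h
  -- derivative of g at s
  have hd : HasDerivAt g (fderiv ℝ B (x s) (f (x s))) s := by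
    have h1 : HasFDerivAt B (fderiv ℝ B (x s)) (x s) :=
      ((hB.differentiable one_ne_zero) (x s)).hasFDerivAt
    exact h1.comp_hasDerivAt s (hx' s hs0)
  have hneg : fderiv ℝ B (x s) (f (x s)) < 0 := hLie (x s) hgs0
  -- slope argument: find u > s with g u < 0
  have hdw : HasDerivWithinAt g (fderiv ℝ B (x s) (f (x s))) (Set.Ioi s) s :=
    hd.hasDerivWithinAt
  have hslope := hasDerivWithinAt_iff_tendsto_slope.1 hdw
  rw [Set.diff_singleton_eq_self (by simp : s ∉ Set.Ioi s)] at hslope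
  have h2 : ∀ᶠ u in nhdsWithin s (Set.Ioi s), slope g s u < 0 :=
    hslope.eventually_lt_const hneg
  obtain ⟨u, hu1, hu2⟩ := (h2.and (Filter.eventually_mem_set.2 hIoo)).exists
  have hgu : g u < 0 := by
    have hus : 0 < u - s := sub_pos.2 hu2.1
    have : (g u - g s) / (u - s) < 0 := by
      simpa [slope_def_field, div_eq_inv_mul] using hu1
    rcases div_neg_iff.1 this with h | h
    · linarith [h.2]
    · linarith [h.1]
  have huA : u ∈ A := ⟨⟨le_of_lt (lt_of_le_of_lt hs0 hu2.1), le_of_lt hu2.2⟩, le_of_lt hgu⟩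
  exact absurd (hub u huA) (not_le.2 hu2.1)
end

section
/- Let f : ℝⁿ → ℝⁿ be a vector field, X₀ ⊆ ℝⁿ an initial set, and define the reach set R = {x(t) : t ≥ 0, x a C¹ solution of x' = f(x) with x(0) ∈ X₀}. If B : ℝⁿ → ℝ is continuously differentiable with B ≤ 0 on X₀ and ∇B(y)·f(y) < 0 whenever B(y)=0, then R ⊆ {y | B(y) ≤ 0}. -/
/-- Corollary 3: the sub-zero level set of a barrier certificate over-approximates
the reach set from the initial set `X₀`. -/
theorem barrier_reach_set_overapprox {n : ℕ} (f : (Fin n → ℝ) → (Fin n → ℝ))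
    (X₀ : Set (Fin n → ℝ)) (B : (Fin n → ℝ) → ℝ)
    (R : Set (Fin n → ℝ))
    (hR : R = {p | ∃ x : ℝ → (Fin n → ℝ), ContDiff ℝ 1 x ∧ x 0 ∈ X₀ ∧
      (∀ t : ℝ, 0 ≤ t → HasDerivAt x (f (x t)) t) ∧ ∃ t : ℝ, 0 ≤ t ∧ p = x t})
    (hB : ContDiff ℝ 1 B)
    (hInit : ∀ y ∈ X₀, B y ≤ 0)
    (hLie : ∀ y, B y = 0 → fderiv ℝ B y (f y) < 0) :
    R ⊆ {y | B y ≤ 0} := by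
  subst hR
  rintro p ⟨x, hxC, hx0, hD, t, ht, rfl⟩
  by_contra hpos
  simp only [Set.mem_setOf_eq, not_le] at hpos
  set g : ℝ → ℝ := fun u => B (x u) with hg
  have hgc : Continuous g := (hB.continuous).comp hxC.continuous
  set S : Set ℝ := {u | u ∈ Set.Icc (0:ℝ) t ∧ g u ≤ 0} with hS
  have h0S : (0:ℝ) ∈ S := ⟨⟨le_refl 0, ht⟩, hInit _ hx0⟩
  have hSne : S.Nonempty := ⟨0, h0S⟩
  have hSbdd : BddAbove S := ⟨t, fun u hu => hu.1.2⟩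
  have hSclosed : IsClosed S := by
    have : S = Set.Icc (0:ℝ) t ∩ g ⁻¹' Set.Iic 0 := by
      ext u; simp [hS, Set.mem_Icc, and_assoc]
    rw [this]
    exact isClosed_Icc.inter (isClosed_Iic.preimage hgc)
  set s : ℝ := sSup S with hs
  have hsS : s ∈ S := hSclosed.csSup_mem hSne hSbdd
  have hs0 : 0 ≤ s := hsS.1.1
  have hst : s ≤ t := hsS.1.2
  have hgs : g s ≤ 0 := hsS.2
  have hslt : s < t := lt_of_le_of_ne hst (fun h => absurd hpos (not_lt.mpr (h ▸ hgs)))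
  -- in both cases, g is eventually negative just to the right of s
  have hkey : ∀ᶠ u in nhdsWithin s (Set.Ioi s), g u < 0 := by
    rcases lt_or_eq_of_le hgs with hneg | hzero
    · have : ∀ᶠ u in nhds s, g u < 0 :=
        (hgc.continuousAt : ContinuousAt g s).eventually_lt continuousAt_const hneg
      exact this.filter_mono nhdsWithin_le_nhds
    · -- g s = 0, use the derivative
      have hd : HasDerivAt g (fderiv ℝ B (x s) (f (x s))) s := by
        have hBd : HasFDerivAt B (fderiv ℝ B (x s)) (x s) :=
          (hB.differentiable one_ne_zero (x s)).hasFDerivAt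
        exact hBd.comp_hasDerivAt s (hD s hs0)
      have hdneg : fderiv ℝ B (x s) (f (x s)) < 0 := hLie _ hzero
      have hslope := hasDerivAt_iff_tendsto_slope.mp hd
      have hev : ∀ᶠ u in nhdsWithin s {s}ᶜ, slope g s u < 0 :=
        hslope.eventually_lt_const hdneg
      have hle : nhdsWithin s (Set.Ioi s) ≤ nhdsWithin s {s}ᶜ :=
        nhdsWithin_mono s (fun u hu => ne_of_gt hu)
      filter_upwards [hev.filter_mono hle, self_mem_nhdsWithin] with u hu hu'
      have hus : s < u := hu'
      have : (g u - g s) / (u - s) < 0 := by rwa [slope_def_field] at hu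
      have := mul_neg_of_neg_of_pos this (sub_pos.mpr hus)
      rw [div_mul_cancel₀ _ (by linarith : u - s ≠ 0)] at this
      linarith [hzero]
  have hlt : ∀ᶠ u in nhdsWithin s (Set.Ioi s), u < t :=
    (Filter.Tendsto.eventually_lt_const hslt Filter.tendsto_id).filter_mono nhdsWithin_le_nhds
  have : ∃ u, s < u ∧ u < t ∧ g u < 0 := by
    have := (hkey.and (hlt.and self_mem_nhdsWithin)).exists
    obtain ⟨u, h1, h2, h3⟩ := this
    exact ⟨u, h3, h2, h1⟩
  obtain ⟨u, hsu, hut, hgu⟩ := this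
  have huS : u ∈ S := ⟨⟨le_of_lt (lt_of_le_of_lt hs0 hsu), le_of_lt hut⟩, le_of_lt hgu⟩
  exact absurd (le_csSup hSbdd huS) (not_le.mpr hsu)
end

section
/- Let f : ℝⁿ → ℝⁿ be a vector field, X_b ⊆ ℝⁿ a working region, X₀ ⊆ X_b an initial set, and B : ℝⁿ → ℝ continuously differentiable with B ≤ 0 on X₀ and ∇B(y)·f(y) < 0 for all y ∈ X_b with B(y) = 0. Let x be a C¹ trajectory of x' = f(x) with x(0) ∈ X₀, and let T ≥ 0 be such that x(s) ∈ X_b for all s ∈ [0, T]. Then x(t) ∈ {y ∈ X_b | B(y) ≤ 0} for all t ∈ [0, T]. -/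
/-- Theorem 4 (working region): if the Lie derivative condition holds only inside the
working region `Xb`, then a trajectory starting in `X₀ ⊆ Xb` remains in
`{y ∈ Xb | B y ≤ 0}` as long as it stays in `Xb`. -/
theorem barrier_working_region {n : ℕ} (f : (Fin n → ℝ) → (Fin n → ℝ))
    (Xb X₀ : Set (Fin n → ℝ)) (B : (Fin n → ℝ) → ℝ)
    (hsub : X₀ ⊆ Xb)
    (hB : ContDiff ℝ 1 B)
    (hInit : ∀ y ∈ X₀, B y ≤ 0)
    (hLie : ∀ y ∈ Xb, B y = 0 → fderiv ℝ B y (f y) < 0)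
    (x : ℝ → (Fin n → ℝ)) (hx : ContDiff ℝ 1 x)
    (hode : ∀ t : ℝ, 0 ≤ t → HasDerivAt x (f (x t)) t)
    (hx0 : x 0 ∈ X₀)
    (T : ℝ) (hT : 0 ≤ T)
    (hstay : ∀ s ∈ Set.Icc (0 : ℝ) T, x s ∈ Xb) :
    ∀ t ∈ Set.Icc (0 : ℝ) T, x t ∈ {y ∈ Xb | B y ≤ 0} := by
  set g : ℝ → ℝ := fun t => B (x t) with hg
  have hgc : Continuous g := hB.continuous.comp hx.continuous
  have hg' : ∀ t : ℝ, 0 ≤ t → HasDerivAt g (fderiv ℝ B (x t) (f (x t))) t := by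
    intro t ht
    exact ((hB.differentiable one_ne_zero (x t)).hasFDerivAt).comp_hasDerivAt t (hode t ht)
  suffices hle : ∀ t ∈ Set.Icc (0 : ℝ) T, g t ≤ 0 by
    intro t ht
    exact ⟨hstay t ht, hle t ht⟩
  by_contra hcon
  push_neg at hcon
  obtain ⟨t₀, ht₀, hgt₀⟩ := hcon
  -- set where g ≤ 0 up to t₀
  set S : Set ℝ := {t ∈ Set.Icc (0 : ℝ) t₀ | g t ≤ 0} with hS
  have hSne : S.Nonempty := ⟨0, ⟨le_refl 0, ht₀.1⟩, hInit (x 0) hx0⟩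
  have hSbdd : BddAbove S := ⟨t₀, fun u hu => hu.1.2⟩
  have hSclosed : IsClosed S :=
    (isClosed_Icc.inter (isClosed_le hgc continuous_const) : IsClosed (Set.Icc 0 t₀ ∩ {t | g t ≤ 0}))
  set s := sSup S with hs
  have hsS : s ∈ S := hSclosed.csSup_mem hSne hSbdd
  have hs0 : 0 ≤ s := hsS.1.1
  have hst₀ : s ≤ t₀ := hsS.1.2
  have hslt : s < t₀ := lt_of_le_of_ne hst₀ (fun h => absurd (h ▸ hsS.2) (not_le.mpr hgt₀))
  have hpos : ∀ u, s < u → u ≤ t₀ → 0 < g u := by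
    intro u hsu hut₀
    by_contra h
    push_neg at h
    have : u ∈ S := ⟨⟨hs0.trans hsu.le, hut₀⟩, h⟩
    exact absurd (le_csSup hSbdd this) (not_le.mpr hsu)
  have hsIccT : s ∈ Set.Icc (0 : ℝ) T := ⟨hs0, hst₀.trans ht₀.2⟩
  have hgs : g s = 0 := by
    rcases lt_or_eq_of_le hsS.2 with hlt | heq
    · -- g s < 0 : continuity gives a point just after s with g < 0
      have : ∀ᶠ u in nhds s, g u < 0 := hgc.continuousAt.eventually_lt continuous_const.continuousAt hlt
      have h2 : ∀ᶠ u in nhdsWithin s (Set.Ioi s), g u < 0 := nhdsWithin_le_nhds this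
      have h3 : Set.Ioo s t₀ ∈ nhdsWithin s (Set.Ioi s) := Ioo_mem_nhdsGT_of_mem ⟨le_rfl, hslt⟩
      obtain ⟨u, hu1, hu2⟩ := (h2.and (Filter.eventually_of_mem h3 (fun u hu => hu))).exists
      exact absurd hu1 (not_lt.mpr (hpos u hu2.1 hu2.2.le).le)
    · exact heq
  -- negative derivative at s
  have hd : fderiv ℝ B (x s) (f (x s)) < 0 := hLie (x s) (hstay s hsIccT) hgs
  have hder := hg' s hs0
  have hslope : Filter.Tendsto (slope g s) (nhdsWithin s {s}ᶜ) (nhds (fderiv ℝ B (x s) (f (x s)))) :=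
    hasDerivAt_iff_tendsto_slope.mp hder
  have hev : ∀ᶠ u in nhdsWithin s {s}ᶜ, slope g s u < 0 :=
    hslope.eventually (Filter.Tendsto.eventually_lt_const hd Filter.tendsto_id)
  have hev' : ∀ᶠ u in nhdsWithin s (Set.Ioi s), slope g s u < 0 :=
    nhdsWithin_mono s (fun u hu => ne_of_gt hu) hev
  have h3 : Set.Ioo s t₀ ∈ nhdsWithin s (Set.Ioi s) := Ioo_mem_nhdsGT_of_mem ⟨le_rfl, hslt⟩
  obtain ⟨u, hu1, hu2⟩ := (hev'.and (Filter.eventually_of_mem h3 (fun u hu => hu))).exists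
  have hus : 0 < u - s := sub_pos.mpr hu2.1
  have : g u < 0 := by
    have := mul_neg_of_neg_of_pos hu1 hus
    rw [slope_def_field, div_mul_cancel₀] at this
    · simpa [hgs] using this
    · exact ne_of_gt hus
  exact absurd this (not_lt.mpr (hpos u hu2.1 hu2.2.le).le)
end

section
/- Let g : ℝ → ℝ be continuously differentiable with g(0) ≤ 0, and suppose that for every t ≥ 0 with g(t) = 0 we have g'(t) < 0. Then g(t) ≤ 0 for all t ≥ 0. -/
/-- Scalar core of the barrier argument: if `g 0 ≤ 0` and `g' t < 0` whenever
`g t = 0` for `t ≥ 0`, then `g t ≤ 0` for all `t ≥ 0`. -/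
theorem scalar_barrier_lemma (g : ℝ → ℝ)
    (hg : ContDiff ℝ 1 g)
    (h0 : g 0 ≤ 0)
    (hLie : ∀ t : ℝ, 0 ≤ t → g t = 0 → deriv g t < 0) :
    ∀ t : ℝ, 0 ≤ t → g t ≤ 0 := by
  intro t ht
  by_contra hpos
  push_neg at hpos
  have hgc : Continuous g := hg.continuous
  have hdiff : Differentiable ℝ g := hg.differentiable one_ne_zero
  set S : Set ℝ := Set.Icc 0 t ∩ {u | g u ≤ 0} with hS
  have h0S : (0:ℝ) ∈ S := ⟨⟨le_rfl, ht⟩, h0⟩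
  have hbdd : BddAbove S := ⟨t, fun u hu => hu.1.2⟩
  have hclosed : IsClosed S := isClosed_Icc.inter (isClosed_le hgc continuous_const)
  set s := sSup S with hs
  have hsmem : s ∈ S := hclosed.csSup_mem ⟨0, h0S⟩ hbdd
  have hsle : g s ≤ 0 := hsmem.2
  have hs0 : 0 ≤ s := hsmem.1.1
  have hst : s < t := lt_of_le_of_ne hsmem.1.2 (fun h => absurd (h ▸ hsle) (not_le.mpr hpos))
  have hubd : ∀ u, u ∈ Set.Ioc s t → 0 < g u := by
    intro u hu
    by_contra hle
    push_neg at hle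
    have : u ∈ S := ⟨⟨hs0.trans hu.1.le, hu.2⟩, hle⟩
    exact absurd (le_csSup hbdd this) (not_le.mpr hu.1)
  have hIoc : Set.Ioc s t ∈ nhdsWithin s (Set.Ioi s) := Ioc_mem_nhdsGT_of_mem ⟨le_rfl, hst⟩
  have hge : 0 ≤ g s := by
    refine ge_of_tendsto (hgc.continuousWithinAt : Filter.Tendsto g (nhdsWithin s (Set.Ioi s)) (nhds (g s))) ?_
    filter_upwards [hIoc] with u hu using (hubd u hu).le
  have hgs : g s = 0 := le_antisymm hsle hge
  have hderiv : deriv g s < 0 := hLie s hs0 hgs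
  have hda : HasDerivAt g (deriv g s) s := (hdiff s).hasDerivAt
  have hslope : Filter.Tendsto (slope g s) (nhdsWithin s {s}ᶜ) (nhds (deriv g s)) :=
    hasDerivAt_iff_tendsto_slope.mp hda
  have hslope' : Filter.Tendsto (slope g s) (nhdsWithin s (Set.Ioi s)) (nhds (deriv g s)) :=
    hslope.mono_left (nhdsWithin_mono s fun u hu => ne_of_gt hu)
  have hev : ∀ᶠ u in nhdsWithin s (Set.Ioi s), slope g s u < 0 :=
    hslope'.eventually_lt_const hderiv
  have hev2 : ∀ᶠ u in nhdsWithin s (Set.Ioi s), 0 < slope g s u := by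
    filter_upwards [hIoc, self_mem_nhdsWithin] with u hu hu'
    have : slope g s u = g u / (u - s) := by
      rw [slope_def_field, hgs, sub_zero]
    rw [this]
    exact div_pos (hubd u hu) (sub_pos.mpr hu')
  have : ∀ᶠ u in nhdsWithin s (Set.Ioi s), False := by
    filter_upwards [hev, hev2] with u h1 h2 using absurd h2 (not_lt.mpr h1.le)
  exact this.exists.elim fun _ h => h
end

section
/- Let f : ℝⁿ → ℝⁿ, let X_b be a compact set, X₀ ⊆ X_b, and let B : ℝⁿ → ℝ satisfy the working-region barrier conditions of Theorem 4 (B ≤ 0 on X₀, B > 0 on X_u ∩ X_b, ∇B·f < 0 on {y ∈ X_b | B(y) = 0}). Then R_b := {y ∈ X_b | B(y) ≤ 0} is disjoint from X_u ∩ X_b, and any trajectory from X₀ that remains in X_b on [0, T] avoids X_u on [0, T]. -/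
/-- Working-region safety: `R_b = {y ∈ Xb | B y ≤ 0}` is disjoint from `Xu ∩ Xb`, and
any trajectory from `X₀` confined to `Xb` on `[0, T]` avoids `Xu` on `[0, T]`. -/
theorem barrier_working_region_safety {n : ℕ} (f : (Fin n → ℝ) → (Fin n → ℝ))
    (Xb X₀ Xu : Set (Fin n → ℝ)) (B : (Fin n → ℝ) → ℝ)
    (hcomp : IsCompact Xb) (hsub : X₀ ⊆ Xb)
    (hB : ContDiff ℝ 1 B)
    (hInit : ∀ y ∈ X₀, B y ≤ 0)
    (hUnsafe : ∀ y ∈ Xu ∩ Xb, 0 < B y)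
    (hLie : ∀ y ∈ Xb, B y = 0 → fderiv ℝ B y (f y) < 0) :
    Disjoint {y ∈ Xb | B y ≤ 0} (Xu ∩ Xb) ∧
    (∀ x : ℝ → (Fin n → ℝ), ContDiff ℝ 1 x →
      (∀ t : ℝ, 0 ≤ t → HasDerivAt x (f (x t)) t) →
      x 0 ∈ X₀ →
      ∀ T : ℝ, 0 ≤ T → (∀ s ∈ Set.Icc (0 : ℝ) T, x s ∈ Xb) →
      ∀ t ∈ Set.Icc (0 : ℝ) T, x t ∉ Xu) := by
  constructor
  · rw [Set.disjoint_left]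
    rintro y ⟨hyb, hyB⟩ hyu
    exact absurd (hUnsafe y hyu) (not_lt.2 hyB)
  · intro x hx hx' h0 T hT hconf t ht hxu
    set g : ℝ → ℝ := fun s => B (x s) with hgdef
    have hgc : Continuous g := hB.continuous.comp hx.continuous
    have hgt : 0 < g t := hUnsafe (x t) ⟨hxu, hconf t ht⟩
    set S : Set ℝ := Set.Icc 0 t ∩ {s | g s ≤ 0} with hSdef
    have hS0 : (0:ℝ) ∈ S := ⟨⟨le_refl 0, ht.1⟩, hInit _ h0⟩
    have hSne : S.Nonempty := ⟨0, hS0⟩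
    have hSbd : BddAbove S := ⟨t, fun s hs => hs.1.2⟩
    have hSclosed : IsClosed S :=
      isClosed_Icc.inter (isClosed_le hgc continuous_const)
    set s₀ : ℝ := sSup S with hs₀def
    have hs₀S : s₀ ∈ S := hSclosed.csSup_mem hSne hSbd
    have hs₀le : s₀ ≤ t := hs₀S.1.2
    have hs₀0 : 0 ≤ s₀ := hs₀S.1.1
    have hs₀lt : s₀ < t := by
      rcases lt_or_eq_of_le hs₀le with h | h
      · exact h
      · exact absurd hs₀S.2 (by rw [h]; exact not_le.2 hgt)
    have hpos : ∀ s, s₀ < s → s ≤ t → 0 < g s := by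
      intro s h1 h2
      by_contra hle
      exact absurd (le_csSup hSbd ⟨⟨le_trans hs₀0 h1.le, h2⟩, not_lt.1 hle⟩)
        (not_le.2 h1)
    have hIoc : Set.Ioc s₀ t ∈ nhdsWithin s₀ (Set.Ioi s₀) :=
      Ioc_mem_nhdsGT_of_mem ⟨le_refl s₀, hs₀lt⟩
    have hgz : g s₀ = 0 := by
      have hle2 : g s₀ ≤ 0 := hs₀S.2
      rcases lt_or_eq_of_le hle2 with h | h
      · exfalso
        have hev0 : ∀ᶠ s in nhds s₀, g s < 0 := by
          have : Set.Iio (0:ℝ) ∈ nhds (g s₀) := Iio_mem_nhds h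
          exact hgc.continuousAt.preimage_mem_nhds this
        have hev : ∀ᶠ s in nhdsWithin s₀ (Set.Ioi s₀), g s < 0 :=
          eventually_nhdsWithin_of_eventually_nhds hev0
        rcases (hev.and hIoc).exists with ⟨s, hs1, hs2⟩
        exact absurd (hpos s hs2.1 hs2.2) (not_lt.2 hs1.le)
      · exact h
    have hxb : x s₀ ∈ Xb := hconf s₀ ⟨hs₀0, hs₀le.trans ht.2⟩
    have hneg : fderiv ℝ B (x s₀) (f (x s₀)) < 0 := hLie (x s₀) hxb hgz
    have hd : HasDerivAt g (fderiv ℝ B (x s₀) (f (x s₀))) s₀ :=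
      ((hB.differentiable one_ne_zero (x s₀)).hasFDerivAt).comp_hasDerivAt s₀
        (hx' s₀ hs₀0)
    have hslope := hasDerivAt_iff_tendsto_slope.1 hd
    have hslope' : ∀ᶠ s in nhdsWithin s₀ (Set.Ioi s₀),
        slope g s₀ s < 0 := by
      have h1 : ∀ᶠ s in nhdsWithin s₀ ({s₀}ᶜ), slope g s₀ s < 0 :=
        hslope.eventually_lt_const hneg
      exact h1.filter_mono (nhdsWithin_mono s₀ (fun s hs => ne_of_gt hs))
    rcases (hslope'.and hIoc).exists with ⟨s, hs1, hs2⟩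
    have hgs : 0 < g s := hpos s hs2.1 hs2.2
    have : slope g s₀ s = g s / (s - s₀) := by
      rw [slope_def_field, hgz, sub_zero]
    rw [this] at hs1
    have : 0 < g s / (s - s₀) := div_pos hgs (sub_pos.2 hs2.1)
    linarith
end
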